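/- Let n ≥ 2 and let F ∈ ℝ^{2n×2n} have block form [[A,B],[C,D]] with n×n blocks. Assume det F ≠ 0, and assume that both (A | B) and (C | D) satisfy: every 2×2 minor with both rows from the same block row, one column index ≤ n and one column index > n, vanishes. Then F is split, i.e., B = 0 and C = 0, or A = 0 and D = 0. -/

import Mathlib

open Matrix

lemma exists_entry_ne {n : ℕ} {A : Matrix (Fin n) (Fin n) ℝ} (hA : A ≠ 0) :
    ∃ p q, A p q ≠ 0 := by
  contrapose! hA
  ext i j
  simpa using hA i j

/-- If all mixed 2×2 minors of (A|B) vanish and A,B ≠ 0 (n ≥ 2), two rows of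
(A|B) are proportional. -/
lemma rows_dep {n : ℕ} (hn : 2 ≤ n) (A B : Matrix (Fin n) (Fin n) ℝ)
    (hAB : ∀ i₁ i₂ : Fin n, i₁ < i₂ → ∀ j₁ j₂ : Fin n,
      A i₁ j₁ * B i₂ j₂ - B i₁ j₂ * A i₂ j₁ = 0)
    (hA : A ≠ 0) (hB : B ≠ 0) :
    ∃ i k : Fin n, i ≠ k ∧ ∃ c : ℝ,
      (∀ j, A i j = c * A k j) ∧ (∀ j, B i j = c * B k j) := by
  obtain ⟨p, q, hpq⟩ := exists_entry_ne hA
  obtain ⟨r, l, hrl⟩ := exists_entry_ne hB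
  -- find a row with both A and B nonzero
  have key : ∃ p q l, A p q ≠ 0 ∧ B p l ≠ 0 := by
    rcases lt_trichotomy p r with h | h | h
    · have := hAB p r h q l
      have h1 : A p q * B r l ≠ 0 := mul_ne_zero hpq hrl
      have h2 : B p l * A r q = A p q * B r l := by linarith [hAB p r h q l]
      exact ⟨p, q, l, hpq, fun hz => h1 (by rw [← h2, hz, zero_mul])⟩
    · exact ⟨p, q, l, hpq, h ▸ hrl⟩
    · have h2 : A r q * B p l = B r l * A p q := by linarith [hAB r p h q l]
      have h1 : B r l * A p q ≠ 0 := mul_ne_zero hrl hpq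
      exact ⟨p, q, l, hpq, fun hz => h1 (by rw [← h2, hz, mul_zero])⟩
  obtain ⟨p, q, l, hApq, hBpl⟩ := key
  haveI : Nontrivial (Fin n) := Fin.nontrivial_iff_two_le.mpr hn
  obtain ⟨k, hk⟩ := exists_ne p
  rcases lt_trichotomy p k with h | h | h
  · -- relation: A p j₁ * B k j₂ = B p j₂ * A k j₁
    have R : ∀ j₁ j₂, A p j₁ * B k j₂ = B p j₂ * A k j₁ := fun j₁ j₂ => by
      linarith [hAB p k h j₁ j₂]
    by_cases hBk : ∀ j, B k j = 0
    · refine ⟨k, p, hk, 0, fun j => ?_, fun j => ?_⟩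
      · have := R j l
        rw [hBk l] at this
        have : B p l * A k j = 0 := by linarith
        have := (mul_eq_zero.mp this).resolve_left hBpl
        simp [this]
      · simp [hBk j]
    · push_neg at hBk
      obtain ⟨l', hl'⟩ := hBk
      refine ⟨p, k, hk.symm, B p l' / B k l', fun j => ?_, fun j => ?_⟩
      · field_simp
        linarith [R j l']
      · have ha : A p q = B p l' / B k l' * A k q := by
          field_simp; linarith [R q l']
        have hAkq : A k q ≠ 0 := by
          intro hz; rw [hz] at ha; simp at ha; exact hApq ha
        have := R q j
        rw [ha] at this
        field_simp at this ⊢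
        have := mul_left_cancel₀ hAkq (by linear_combination (-A k q) * this : A k q * (B k l' * B p j) = A k q * (B p l' * B k j))
        linarith
  · exact absurd h.symm hk
  · have R : ∀ j₁ j₂, A k j₁ * B p j₂ = B k j₂ * A p j₁ := fun j₁ j₂ => by
      linarith [hAB k p h j₁ j₂]
    by_cases hBk : ∀ j, B k j = 0
    · refine ⟨k, p, hk, 0, fun j => ?_, fun j => ?_⟩
      · have := R j l
        rw [hBk l] at this
        have : A k j * B p l = 0 := by linarith
        have := (mul_eq_zero.mp this).resolve_right hBpl
        simp [this]
      · simp [hBk j]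
    · push_neg at hBk
      obtain ⟨l', hl'⟩ := hBk
      refine ⟨p, k, hk.symm, B p l' / B k l', fun j => ?_, fun j => ?_⟩
      · field_simp
        linarith [R j l']
      · have ha : A p q = B p l' / B k l' * A k q := by
          field_simp; linarith [R q l']
        have hAkq : A k q ≠ 0 := by
          intro hz; rw [hz] at ha; simp at ha; exact hApq ha
        have := R q j
        rw [ha] at this
        field_simp at this ⊢
        have := mul_left_cancel₀ hAkq (by linear_combination (A k q) * this : A k q * (B k l' * B p j) = A k q * (B p l' * B k j))
        linarith

/-- If two rows of (A|B) are proportional, det of the block matrix vanishes. -/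
lemma det_zero_of_prop_rows {n : ℕ} (A B C D : Matrix (Fin n) (Fin n) ℝ)
    (i k : Fin n) (hik : i ≠ k) (c : ℝ)
    (h1 : ∀ j, A i j = c * A k j) (h2 : ∀ j, B i j = c * B k j) :
    (Matrix.fromBlocks A B C D).det = 0 := by
  by_contra hd
  set v : Fin n ⊕ Fin n → ℝ :=
    Sum.elim (fun x => if x = i then 1 else if x = k then -c else 0) 0 with hv_def
  have hrow : ∀ (M : Matrix (Fin n) (Fin n) ℝ), (∀ j, M i j = c * M k j) →
      ∀ j, (∑ x, (if x = i then (1:ℝ) else if x = k then -c else 0) * M x j) = 0 := by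
    intro M hM j
    have : ∀ x : Fin n, (if x = i then (1:ℝ) else if x = k then -c else 0) * M x j
        = (if x = i then M i j else 0) + (if x = k then -c * M k j else 0) := by
      intro x
      by_cases hxi : x = i
      · subst hxi; simp [hik]
      · by_cases hxk : x = k
        · subst hxk; simp [hxi]
        · simp [hxi, hxk]
    rw [Finset.sum_congr rfl fun x _ => this x, Finset.sum_add_distrib]
    simp [Finset.sum_ite_eq', hM j]
  have hv : Matrix.vecMul v (Matrix.fromBlocks A B C D) = 0 := by
    funext x
    cases x with
    | inl j =>
      simpa [Matrix.vecMul, dotProduct, Fintype.sum_sum_type, Matrix.fromBlocks, hv_def]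
        using hrow A h1 j
    | inr j =>
      simpa [Matrix.vecMul, dotProduct, Fintype.sum_sum_type, Matrix.fromBlocks, hv_def]
        using hrow B h2 j
  have := Matrix.eq_zero_of_vecMul_eq_zero hd hv
  have h1 : v (Sum.inl i) = 1 := by simp [hv_def]
  rw [this] at h1
  simpa using h1

theorem stmt5 (n : ℕ) (hn : 2 ≤ n) (A B C D : Matrix (Fin n) (Fin n) ℝ)
    (hdet : (Matrix.fromBlocks A B C D).det ≠ 0)
    (hAB : ∀ i₁ i₂ : Fin n, i₁ < i₂ → ∀ j₁ j₂ : Fin n,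
      A i₁ j₁ * B i₂ j₂ - B i₁ j₂ * A i₂ j₁ = 0)
    (hCD : ∀ i₁ i₂ : Fin n, i₁ < i₂ → ∀ j₁ j₂ : Fin n,
      C i₁ j₁ * D i₂ j₂ - D i₁ j₂ * C i₂ j₁ = 0) :
    (B = 0 ∧ C = 0) ∨ (A = 0 ∧ D = 0) := by
  have hswap : (Matrix.fromBlocks A B C D).det = (Matrix.fromBlocks D C B A).det := by
    rw [← Matrix.det_submatrix_equiv_self (Equiv.sumComm (Fin n) (Fin n))
      (Matrix.fromBlocks D C B A)]
    congr 1
    ext (i | i) (j | j) <;> simp [Matrix.fromBlocks]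
  have hAB0 : A = 0 ∨ B = 0 := by
    by_contra h
    push_neg at h
    obtain ⟨i, k, hik, c, h1, h2⟩ := rows_dep hn A B hAB h.1 h.2
    exact hdet (det_zero_of_prop_rows A B C D i k hik c h1 h2)
  have hCD0 : C = 0 ∨ D = 0 := by
    by_contra h
    push_neg at h
    obtain ⟨i, k, hik, c, h1, h2⟩ := rows_dep hn C D hCD h.1 h.2
    refine hdet ?_
    rw [hswap]
    exact det_zero_of_prop_rows D C B A i k hik c h2 h1
  have hpos : 0 < n := by omega
  rcases hAB0 with hA | hB <;> rcases hCD0 with hC | hD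
  · -- A = 0, C = 0 : column inl ⟨0⟩ is zero
    exfalso
    apply hdet
    apply Matrix.det_eq_zero_of_column_eq_zero (Sum.inl ⟨0, hpos⟩)
    rintro (x | x) <;> simp [Matrix.fromBlocks, hA, hC]
  · exact Or.inr ⟨hA, hD⟩
  · exact Or.inl ⟨hB, hC⟩
  · exfalso
    apply hdet
    apply Matrix.det_eq_zero_of_column_eq_zero (Sum.inr ⟨0, hpos⟩)
    rintro (x | x) <;> simp [Matrix.fromBlocks, hB, hD]
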